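/- arXiv:1404.3454 — 2 statements merged into one kernel-verified Lean document; each statement's English description precedes it below -/
import Mathlib

section
/- Let G be a finite simple graph and H a connected subgraph of G with |V(H)| ≥ 3 such that for each pair of distinct non-adjacent vertices u, v ∈ V(H), deg_H(u) + deg_H(v) ≥ |V(H)|. Let K ⊆ V(H) with k = |K| ≥ 2 and suppose |V(H)| ≤ (k−1)k. Then there exists a path P in H whose two endpoints both belong to K and which contains every vertex of K, such that for every tree subgraph T* of G with K ⊆ V(T*), the number of edges of P is at most k times the number of edges of T*. -/
open List

namespace OreHelp

variable {α : Type*}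

lemma chain'_rev_iff {R : α → α → Prop} (hs : Symmetric R) {l : List α} :
    List.IsChain R l.reverse ↔ List.IsChain R l := by
  rw [List.isChain_reverse]
  constructor
  · exact fun h => h.imp (fun _ _ hab => hs hab)
  · exact fun h => h.imp (fun _ _ hab => hs hab)

lemma mem_dropWhile_of {p : α → Bool} {x : α} : ∀ {l : List α}, x ∈ l → p x = false →
    x ∈ l.dropWhile p := by
  intro l hx hpx
  induction l with
  | nil => simp at hx
  | cons a t ih =>
    rw [List.dropWhile_cons]
    by_cases hpa : p a = true
    · simp only [hpa, if_true]
      rcases List.mem_cons.1 hx with rfl | hxt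
      · rw [hpa] at hpx; simp at hpx
      · exact ih hxt
    · simp only [hpa, if_false]
      exact hx

lemma head?_dropWhile_false {p : α → Bool} : ∀ (l : List α), ∀ x ∈ (l.dropWhile p).head?,
    p x = false := by
  intro l
  induction l with
  | nil => simp
  | cons a t ih =>
    rw [List.dropWhile_cons]
    by_cases hpa : p a = true
    · simpa [hpa] using ih
    · have hpa' : p a = false := by simpa using hpa
      intro x hx
      rw [hpa'] at hx
      simp only [Bool.false_eq_true, if_false, List.head?_cons, Option.mem_def,
        Option.some.injEq] at hx
      subst hx
      exact hpa'

lemma getLast?_dropWhile {p : α → Bool} {l : List α} (h : l.dropWhile p ≠ []) :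
    (l.dropWhile p).getLast? = l.getLast? := by
  obtain ⟨pre, hpre⟩ := List.dropWhile_suffix p (l := l)
  conv_rhs => rw [← hpre]
  rw [List.getLast?_append, List.getLast?_eq_getLast h]
  simp

lemma rotChain {R : α → α → Prop} (c₁ c₂ : List α) (h : List.IsChain R (c₁ ++ c₂))
    (hw : ∀ x ∈ (c₁ ++ c₂).getLast?, ∀ y ∈ (c₁ ++ c₂).head?, R x y) :
    List.IsChain R (c₂ ++ c₁) := by
  rcases List.isChain_append.1 h with ⟨h1, h2, h12⟩
  rw [List.isChain_append]
  refine ⟨h2, h1, ?_⟩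
  intro x hx y hy
  apply hw
  · rw [List.getLast?_append]
    rcases c₂ with _ | _
    · simp at hx
    · rw [hx]; rfl
  · rw [List.head?_append]
    rcases c₁ with _ | _
    · simp at hy
    · rw [hy]; rfl

lemma chainToWalk {V : Type*} (Γ : SimpleGraph V) :
    ∀ (l : List V) (h : l ≠ []), List.IsChain Γ.Adj l →
      ∃ p : Γ.Walk (l.head h) (l.getLast h), p.support = l := by
  intro l
  induction l with
  | nil => intro h; exact absurd rfl h
  | cons a t ih =>
    intro h hc
    rcases t with _ | ⟨b, t'⟩
    · exact ⟨SimpleGraph.Walk.nil, rfl⟩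
    · have ht : (b :: t') ≠ [] := List.cons_ne_nil _ _
      rw [List.isChain_cons_cons] at hc
      obtain ⟨q, hq⟩ := ih ht hc.2
      have hgl : (a :: b :: t').getLast h = (b :: t').getLast ht := List.getLast_cons ht
      refine ⟨(SimpleGraph.Walk.cons hc.1 (q.copy List.head_cons rfl)).copy List.head_cons.symm hgl.symm, ?_⟩
      rw [SimpleGraph.Walk.support_copy, SimpleGraph.Walk.support_cons,
        SimpleGraph.Walk.support_copy, hq]

lemma crossEdge {V : Type*} {Γ : SimpleGraph V} (hconn : Γ.Preconnected) (l : List V)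
    (hl : l ≠ []) {w : V} (hw : w ∉ l) : ∃ x y, x ∉ l ∧ y ∈ l ∧ Γ.Adj x y := by
  have hhead : l.head hl ∈ l := List.head_mem hl
  obtain ⟨p⟩ := hconn w (l.head hl)
  suffices aux : ∀ (u v : V), Γ.Walk u v → u ∉ l → v ∈ l → ∃ x y, x ∉ l ∧ y ∈ l ∧ Γ.Adj x y by
    exact aux _ _ p hw hhead
  intro u v p
  induction p with
  | nil => intro hu hv; exact absurd hv hu
  | @cons u u' v hadj q ih =>
    intro hu hv
    by_cases hu' : u' ∈ l
    · exact ⟨u, u', hu, hu', hadj⟩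
    · exact ih hu' hv


lemma rotChain2 {α : Type*} {R : α → α → Prop} (c₁ c₂ : List α) (h : List.IsChain R (c₁ ++ c₂))
    (hw : ∀ x ∈ (c₁ ++ c₂).getLast?, ∀ y ∈ (c₁ ++ c₂).head?, R x y) :
    List.IsChain R (c₂ ++ c₁) := by
  rcases List.isChain_append.1 h with ⟨h1, h2, h12⟩
  rw [List.isChain_append]
  refine ⟨h2, h1, ?_⟩
  intro x hx y hy
  apply hw
  · rw [List.getLast?_append]
    rcases c₂ with _ | _
    · simp at hx
    · rw [hx]; rfl
  · rw [List.head?_append]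
    rcases c₁ with _ | _
    · simp at hy
    · rw [hy]; rfl

lemma chain'_rev_iff2 {α : Type*} {R : α → α → Prop} (hs : Symmetric R) {l : List α} :
    List.IsChain R l.reverse ↔ List.IsChain R l := by
  rw [List.isChain_reverse]
  exact ⟨fun h => h.imp (fun _ _ hab => hs hab), fun h => h.imp (fun _ _ hab => hs hab)⟩

lemma crossEdge2 {V : Type*} {Γ : SimpleGraph V} (hconn : Γ.Preconnected) (l : List V)
    (hl : l ≠ []) {w : V} (hw : w ∉ l) : ∃ x y, x ∉ l ∧ y ∈ l ∧ Γ.Adj x y := by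
  have hhead : l.head hl ∈ l := List.head_mem hl
  obtain ⟨p⟩ := hconn w (l.head hl)
  suffices aux : ∀ (u v : V), Γ.Walk u v → u ∉ l → v ∈ l → ∃ x y, x ∉ l ∧ y ∈ l ∧ Γ.Adj x y by
    exact aux _ _ p hw hhead
  intro u v p
  induction p with
  | nil => intro hu hv; exact absurd hv hu
  | @cons u u' v hadj q ih =>
    intro hu hv
    by_cases hu' : u' ∈ l
    · exact ⟨u, u', hu, hu', hadj⟩
    · exact ih hu' hv

lemma exists_adj_of_ne2 {V : Type*} {Γ : SimpleGraph V} (h : Γ.Preconnected) {a w : V}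
    (hne : a ≠ w) : ∃ u, Γ.Adj a u := by
  obtain ⟨p⟩ := h a w
  suffices aux : ∀ u v, Γ.Walk u v → u ≠ v → ∃ z, Γ.Adj u z by exact aux _ _ p hne
  intro u v p
  cases p with
  | nil => intro h'; exact absurd rfl h'
  | cons h' q => intro _; exact ⟨_, h'⟩

lemma key {α : Type*} [Fintype α] [DecidableEq α] (Γ : SimpleGraph α) [DecidableRel Γ.Adj]
    (hconn : Γ.Connected)
    (hOre : ∀ u v : α, u ≠ v → ¬Γ.Adj u v →
      Fintype.card α ≤ (Γ.neighborSet u).ncard + (Γ.neighborSet v).ncard)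
    (l : List α) (hc : List.IsChain Γ.Adj l) (hn : l.Nodup) (hne : l ≠ [])
    (hmax : ∀ m : List α, List.IsChain Γ.Adj m → m.Nodup → m ≠ [] → m.length ≤ l.length) :
    ∀ v, v ∈ l := by
  by_contra hcon
  push_neg at hcon
  obtain ⟨w, hw⟩ := hcon
  set a := l.head hne with ha
  set b := l.getLast hne with hb
  -- Step A: all neighbors of the endpoints lie on l
  have stepA1 : ∀ x, Γ.Adj a x → x ∈ l := by
    intro x hx
    by_contra hxl
    have hch : List.IsChain Γ.Adj (x :: l) := by
      rw [List.isChain_cons]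
      refine ⟨?_, hc⟩
      intro y hy
      rw [List.head?_eq_head hne, Option.mem_def, Option.some.injEq] at hy
      rw [← hy]
      exact hx.symm
    have := hmax (x :: l) hch (List.nodup_cons.2 ⟨hxl, hn⟩) (List.cons_ne_nil _ _)
    simp at this
  have stepA2 : ∀ x, Γ.Adj b x → x ∈ l := by
    intro x hx
    by_contra hxl
    have hch : List.IsChain Γ.Adj (l ++ [x]) := by
      rw [List.isChain_append]
      refine ⟨hc, List.isChain_singleton x, ?_⟩
      intro u hu v hv
      rw [List.getLast?_eq_getLast hne, Option.mem_def, Option.some.injEq] at hu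
      simp only [List.head?_cons, Option.mem_def, Option.some.injEq] at hv
      rw [← hu, ← hv]
      exact hx
    have hnd : (l ++ [x]).Nodup := by
      rw [List.nodup_append]
      refine ⟨hn, List.nodup_singleton x, fun u hu v hv hux => ?_⟩
      rw [List.mem_singleton] at hv
      subst hv; subst hux
      exact hxl hu
    have := hmax _ hch hnd (by simp)
    simp at this
  have ha_mem : a ∈ l := List.head_mem hne
  have hb_mem : b ∈ l := List.getLast_mem hne
  -- l has length at least 2
  have h2 : 2 ≤ l.length := by
    have haw : a ≠ w := fun h => hw (h ▸ ha_mem)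
    obtain ⟨u', hadj⟩ := exists_adj_of_ne2 hconn.preconnected haw
    have hu'l : u' ∈ l := stepA1 u' hadj
    have hu'a : u' ≠ a := fun h => (h ▸ hadj).ne rfl
    by_contra hlen
    push_neg at hlen
    interval_cases hl2 : l.length
    · exact hne (List.length_eq_zero_iff.1 hl2)
    · obtain ⟨z, rfl⟩ := List.length_eq_one_iff.1 hl2
      simp only [List.mem_singleton] at ha_mem hu'l
      exact hu'a (hu'l.trans ha_mem.symm)
  have hlen_pos : 0 < l.length := List.length_pos_iff.2 hne
  have hha : l[0]'hlen_pos = a := (List.head_eq_getElem_zero hne).symm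
  have hhb : l[l.length - 1]'(by omega) = b := by rw [hb, List.getLast_eq_getElem]
  have hab : a ≠ b := by
    intro hab
    have h0 : l.get ⟨0, hlen_pos⟩ = l.get ⟨l.length - 1, by omega⟩ := by
      rw [List.get_eq_getElem, List.get_eq_getElem, hha, hhb, hab]
    have := (hn.get_inj_iff).1 h0
    simp only [Fin.mk.injEq] at this
    omega
  -- auxiliary facts about indexOf for neighbors of a and b
  have idx_of : ∀ (x : α) (hx : x ∈ l), l[l.idxOf x]'(List.idxOf_lt_length_iff.2 hx) = x := by
    intro x hx
    have h1 := List.idxOf_get (a := x) (l := l) (List.idxOf_lt_length_iff.2 hx)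
    rw [List.get_eq_getElem] at h1
    exact h1
  -- Build a "cycle list" c : a permutation of l which is a chain and wraps around.
  obtain ⟨c, hcperm, hcc, hcwrap⟩ :
      ∃ c : List α, c ~ l ∧ List.IsChain Γ.Adj c ∧
        (∀ x ∈ c.getLast?, ∀ y ∈ c.head?, Γ.Adj x y) := by
    by_cases hadj : Γ.Adj b a
    · refine ⟨l, List.Perm.refl l, hc, ?_⟩
      intro x hx y hy
      rw [List.getLast?_eq_getLast hne, Option.mem_def, Option.some.injEq] at hx
      rw [List.head?_eq_head hne, Option.mem_def, Option.some.injEq] at hy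
      rw [← hx, ← hy]
      exact hadj
    · have hnadj : ¬ Γ.Adj a b := fun h => hadj h.symm
      have hncard : ∀ z : α, (Γ.neighborSet z).ncard = (Γ.neighborFinset z).card := by
        intro z
        rw [← Nat.card_coe_set_eq, Nat.card_eq_fintype_card,
          SimpleGraph.card_neighborSet_eq_degree]
        rfl
      have hOreab := hOre a b hab hnadj
      rw [hncard a, hncard b] at hOreab
      set p := l.length - 1 with hp
      have hplen : p + 1 = l.length := by rw [hp]; omega
      have hp1 : 1 ≤ p := by omega
      set S := (Finset.range p).filter (fun i => Γ.Adj a (l.getD (i+1) a)) with hS_def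
      set T := (Finset.range p).filter (fun i => Γ.Adj b (l.getD i a)) with hT_def
      have hidxa : ∀ x, Γ.Adj a x → 1 ≤ l.idxOf x ∧ l.idxOf x < l.length := by
        intro x hx
        have hxl : x ∈ l := stepA1 x hx
        have hidx : l.idxOf x < l.length := List.idxOf_lt_length_iff.2 hxl
        have hxa : x ≠ a := fun h => ((h ▸ hx).ne rfl)
        have hidx0 : l.idxOf x ≠ 0 := by
          intro h0
          apply hxa
          have := idx_of x hxl
          rw [← this]
          simp only [h0]
          rw [← hha]
        exact ⟨by omega, hidx⟩
      have hidxb : ∀ x, Γ.Adj b x → l.idxOf x < p := by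
        intro x hx
        have hxl : x ∈ l := stepA2 x hx
        have hidx : l.idxOf x < l.length := List.idxOf_lt_length_iff.2 hxl
        have hxb : x ≠ b := fun h => ((h ▸ hx).ne rfl)
        have hidxp : l.idxOf x ≠ l.length - 1 := by
          intro h0
          apply hxb
          have := idx_of x hxl
          rw [← this]
          simp only [h0]
          rw [← hhb]
        omega
      have hS : (Γ.neighborFinset a).card ≤ S.card := by
        apply Finset.card_le_card_of_injOn (fun x => l.idxOf x - 1)
        · intro x hx
          rw [Finset.mem_coe, SimpleGraph.mem_neighborFinset] at hx
          have hxl : x ∈ l := stepA1 x hx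
          obtain ⟨hge, hlt⟩ := hidxa x hx
          rw [Finset.mem_coe, hS_def, Finset.mem_filter, Finset.mem_range]
          beta_reduce
          refine ⟨by omega, ?_⟩
          have heq : l.idxOf x - 1 + 1 = l.idxOf x := by omega
          rw [heq, List.getD_eq_getElem l a hlt, idx_of x hxl]
          exact hx
        · intro x hx y hy hxy
          simp only [Finset.coe_sort_coe, SimpleGraph.mem_neighborFinset, Finset.mem_coe] at hx hy
          obtain ⟨hgx, hlx⟩ := hidxa x hx
          obtain ⟨hgy, hly⟩ := hidxa y hy
          simp only at hxy
          have heq : l.idxOf x = l.idxOf y := by omega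
          have h1 := idx_of x (stepA1 x hx)
          have h2' := idx_of y (stepA1 y hy)
          rw [← h1, ← h2']
          congr 1
      have hT : (Γ.neighborFinset b).card ≤ T.card := by
        apply Finset.card_le_card_of_injOn (fun x => l.idxOf x)
        · intro x hx
          rw [Finset.mem_coe, SimpleGraph.mem_neighborFinset] at hx
          have hxl : x ∈ l := stepA2 x hx
          have hlt := hidxb x hx
          rw [Finset.mem_coe, hT_def, Finset.mem_filter, Finset.mem_range]
          beta_reduce
          refine ⟨hlt, ?_⟩
          rw [List.getD_eq_getElem l a (by omega), idx_of x hxl]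
          exact hx
        · intro x hx y hy hxy
          simp only [Finset.coe_sort_coe, SimpleGraph.mem_neighborFinset, Finset.mem_coe] at hx hy
          simp only at hxy
          have h1 := idx_of x (stepA2 x hx)
          have h2' := idx_of y (stepA2 y hy)
          rw [← h1, ← h2']
          congr 1
      -- pigeonhole: S and T intersect
      have hlen_le : l.length ≤ Fintype.card α := hn.length_le_card
      have hSTcard : p < S.card + T.card := by
        have : Fintype.card α ≤ S.card + T.card :=
          le_trans hOreab (Nat.add_le_add hS hT)
        omega
      have hinter : ∃ i, i ∈ S ∩ T := by
        by_contra hemp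
        push_neg at hemp
        have hunion : S ∪ T ⊆ Finset.range p :=
          Finset.union_subset (Finset.filter_subset _ _) (Finset.filter_subset _ _)
        have h1 : (S ∪ T).card ≤ p := by
          have := Finset.card_le_card hunion
          simpa using this
        have h2' := Finset.card_union_add_card_inter S T
        have h3 : (S ∩ T).card = 0 := by
          rw [Finset.card_eq_zero]
          exact Finset.eq_empty_iff_forall_notMem.2 hemp
        omega
      obtain ⟨i, hi⟩ := hinter
      rw [Finset.mem_inter] at hi
      obtain ⟨hiS, hiT⟩ := hi
      rw [hS_def, Finset.mem_filter, Finset.mem_range] at hiS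
      rw [hT_def, Finset.mem_filter, Finset.mem_range] at hiT
      obtain ⟨hip, hiadj⟩ := hiS
      obtain ⟨-, hiadj'⟩ := hiT
      have hi1 : i + 1 < l.length := by omega
      have hi0 : i < l.length := by omega
      rw [List.getD_eq_getElem l a hi1] at hiadj
      rw [List.getD_eq_getElem l a hi0] at hiadj'
      -- the rotated list
      refine ⟨l.take (i+1) ++ (l.drop (i+1)).reverse, ?_, ?_, ?_⟩
      · calc l.take (i+1) ++ (l.drop (i+1)).reverse
            ~ l.take (i+1) ++ l.drop (i+1) := List.Perm.append_left _ (List.reverse_perm _)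
          _ = l := List.take_append_drop _ _
      · rw [List.isChain_append]
        refine ⟨hc.take _, (chain'_rev_iff2 (fun _ _ h => h.symm)).2 (hc.drop _), ?_⟩
        intro x hx y hy
        have htake : (l.take (i+1)).getLast? = some (l[i]'hi0) := by
          rw [List.take_succ, List.getElem?_eq_getElem hi0, Option.toList_some,
            List.getLast?_append]
          rfl
        have hdrop_ne : l.drop (i+1) ≠ [] := by
          rw [ne_eq, List.drop_eq_nil_iff]
          omega
        have hdg : (l.drop (i+1)).getLast? = some b := by
          have h0 : l.getLast? = some b := by
            rw [List.getLast?_eq_getLast hne]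
          conv_lhs at h0 => rw [← List.take_append_drop (i+1) l]
          rw [List.getLast?_append, List.getLast?_eq_getLast hdrop_ne] at h0
          rw [List.getLast?_eq_getLast hdrop_ne]
          simpa using h0
        rw [htake, Option.mem_def, Option.some.injEq] at hx
        rw [List.head?_reverse, hdg, Option.mem_def, Option.some.injEq] at hy
        rw [← hx, ← hy]
        exact hiadj'.symm
      · intro x hx y hy
        have htake_ne : l.take (i+1) ≠ [] := by
          apply List.ne_nil_of_length_pos
          rw [List.length_take]
          omega
        have h1 : (l.take (i+1) ++ (l.drop (i+1)).reverse).getLast? = some (l[i+1]'hi1) := by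
          rw [List.getLast?_append, List.getLast?_reverse, List.head?_drop,
            List.getElem?_eq_getElem hi1]
          rfl
        have h2' : (l.take (i+1) ++ (l.drop (i+1)).reverse).head? = some a := by
          rw [List.head?_append]
          have : (l.take (i+1)).head? = some a := by
            conv_lhs => rw [← List.cons_head_tail hne]
            rw [List.take_succ_cons]
            rfl
          rw [this]
          rfl
        rw [h1, Option.mem_def, Option.some.injEq] at hx
        rw [h2', Option.mem_def, Option.some.injEq] at hy
        rw [← hx, ← hy]
        exact hiadj.symm
  -- extend the cycle through an outside vertex : contradiction with maximality
  have hwc : w ∉ c := fun h => hw (hcperm.mem_iff.1 h)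
  have hcne : c ≠ [] := by
    intro h0
    have := hcperm.length_eq
    rw [h0] at this
    simp at this
    exact hne (List.length_eq_zero_iff.1 this.symm)
  obtain ⟨x, y, hx, hy, hxy⟩ := crossEdge2 hconn.preconnected c hcne hwc
  obtain ⟨c₁, c₂, rfl⟩ := List.append_of_mem hy
  have hchain_m : List.IsChain Γ.Adj (x :: ((y :: c₂) ++ c₁)) := by
    rw [List.isChain_cons]
    refine ⟨?_, rotChain2 c₁ (y :: c₂) hcc hcwrap⟩
    intro z hz
    rw [List.head?_append, List.head?_cons] at hz
    simp only [Option.or_some, Option.some_or, Option.mem_def, Option.some.injEq] at hz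
    rw [← hz]
    exact hxy
  have hperm_m : ((y :: c₂) ++ c₁) ~ l := List.perm_append_comm.trans hcperm
  have hnodup_m : (x :: ((y :: c₂) ++ c₁)).Nodup := by
    rw [List.nodup_cons]
    refine ⟨fun hxm => hx (List.perm_append_comm.mem_iff.1 hxm), ?_⟩
    exact hperm_m.symm.nodup hn
  have hlen_m := hmax _ hchain_m hnodup_m (List.cons_ne_nil _ _)
  have : ((y :: c₂) ++ c₁).length = l.length := hperm_m.length_eq
  simp only [List.length_cons] at hlen_m
  omega


lemma ore_ham {α : Type*} [Fintype α] [DecidableEq α] (Γ : SimpleGraph α) [DecidableRel Γ.Adj]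
    (hconn : Γ.Connected)
    (hOre : ∀ u v : α, u ≠ v → ¬Γ.Adj u v →
      Fintype.card α ≤ (Γ.neighborSet u).ncard + (Γ.neighborSet v).ncard) :
    ∃ l : List α, List.IsChain Γ.Adj l ∧ l.Nodup ∧ ∀ v, v ∈ l := by
  classical
  obtain ⟨a₀⟩ : Nonempty α := hconn.nonempty
  haveI : Nonempty α := ⟨a₀⟩
  set P : ℕ → Prop := fun m => ∃ l : List α, List.IsChain Γ.Adj l ∧ l.Nodup ∧ l ≠ [] ∧ l.length = m
    with hP
  have hP1 : P 1 := ⟨[a₀], List.isChain_singleton _, List.nodup_singleton _, by simp, rfl⟩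
  have hcard1 : 1 ≤ Fintype.card α := Fintype.card_pos
  have hPN : P (Nat.findGreatest P (Fintype.card α)) := Nat.findGreatest_spec hcard1 hP1
  obtain ⟨l, hc, hn, hlne, hlen⟩ := hPN
  refine ⟨l, hc, hn, ?_⟩
  apply key Γ hconn hOre l hc hn hlne
  intro m hmc hmn hmne
  have hm : P m.length := ⟨m, hmc, hmn, hmne, rfl⟩
  have := Nat.le_findGreatest (hmn.length_le_card) hm
  omega

end OreHelp

set_option maxHeartbeats 1000000 in
/-- Let `G` be a finite simple graph and `H` a connected subgraph of `G` with
`|V(H)| ≥ 3` satisfying the Ore condition (each pair of distinct non-adjacent vertices of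
`H` has degree sum in `H` at least `|V(H)|`). Let `K ⊆ V(H)` with `k = |K| ≥ 2` and
`|V(H)| ≤ (k−1)k`. Then there is a path `P` in `H` whose two endpoints belong to `K`,
containing every vertex of `K`, such that for every tree subgraph `T*` of `G` spanning `K`,
the number of edges of `P` is at most `k` times the number of edges of `T*`. -/
theorem stmt_1 {V : Type*} [Fintype V] [DecidableEq V]
    (G : SimpleGraph V) (H : G.Subgraph)
    (hHconn : H.Connected) (hH3 : 3 ≤ H.verts.ncard)
    (hOre : ∀ u v : V, u ∈ H.verts → v ∈ H.verts → u ≠ v → ¬ H.Adj u v →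
      H.verts.ncard ≤ (H.neighborSet u).ncard + (H.neighborSet v).ncard)
    (K : Set V) (hKH : K ⊆ H.verts) (hk2 : 2 ≤ K.ncard)
    (hsize : H.verts.ncard ≤ (K.ncard - 1) * K.ncard) :
    ∃ (a b : H.verts) (p : H.coe.Walk a b), p.IsPath ∧
      (a : V) ∈ K ∧ (b : V) ∈ K ∧
      (∀ x ∈ K, ∃ y ∈ p.support, (y : V) = x) ∧
      (∀ T : G.Subgraph, T.coe.IsTree → K ⊆ T.verts →
        p.length ≤ K.ncard * T.edgeSet.ncard) := by
  classical
  have hconn : H.coe.Connected := hHconn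
  have hcard : Fintype.card ↥H.verts = H.verts.ncard := by
    rw [← Nat.card_coe_set_eq, Nat.card_eq_fintype_card]
  have hOre' : ∀ u v : ↥H.verts, u ≠ v → ¬H.coe.Adj u v →
      Fintype.card ↥H.verts ≤ (H.coe.neighborSet u).ncard + (H.coe.neighborSet v).ncard := by
    intro u v huv hnadj
    have h1 : (u : V) ≠ (v : V) := fun h => huv (Subtype.ext h)
    have h2 : ¬ H.Adj u v := by
      rwa [SimpleGraph.Subgraph.coe_adj] at hnadj
    have h3 := hOre u v u.2 v.2 h1 h2
    rw [hcard]
    have e : ∀ w : ↥H.verts, (H.coe.neighborSet w).ncard = (H.neighborSet ↑w).ncard := by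
      intro w
      calc (H.coe.neighborSet w).ncard
          = Nat.card (H.coe.neighborSet w) := (Nat.card_coe_set_eq _).symm
        _ = Nat.card (H.neighborSet ↑w) :=
            Nat.card_congr (SimpleGraph.Subgraph.coeNeighborSetEquiv w)
        _ = (H.neighborSet ↑w).ncard := Nat.card_coe_set_eq _
    rw [e u, e v]
    exact h3
  obtain ⟨L, hLc, hLn, hLall⟩ := OreHelp.ore_ham H.coe hconn hOre'
  -- trim the Hamiltonian path between the first and last vertices of K
  set P : ↥H.verts → Bool := fun v => decide ((v : V) ∉ K) with hPdef
  have hPfalse : ∀ v : ↥H.verts, P v = false ↔ (v : V) ∈ K := by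
    intro v; simp [hPdef]
  have hsym : Symmetric H.coe.Adj := fun u v h => h.symm
  obtain ⟨x0, hx0⟩ : K.Nonempty := Set.nonempty_of_ncard_ne_zero (by omega)
  set v0 : ↥H.verts := ⟨x0, hKH hx0⟩ with hv0
  have hPv0 : P v0 = false := (hPfalse v0).2 hx0
  set L1 := L.dropWhile P with hL1def
  have hv0L1 : v0 ∈ L1 := OreHelp.mem_dropWhile_of (hLall v0) hPv0
  have hL1ne : L1 ≠ [] := List.ne_nil_of_mem hv0L1
  have hL1c : List.IsChain H.coe.Adj L1 := hLc.suffix (List.dropWhile_suffix P)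
  have hL1n : L1.Nodup := hLn.sublist (List.dropWhile_suffix P).sublist
  have hL1head : ((L1.head hL1ne : ↥H.verts) : V) ∈ K := by
    rw [← hPfalse]
    exact OreHelp.head?_dropWhile_false (p := P) L _ (List.head?_eq_head hL1ne)
  set dw := L1.reverse.dropWhile P with hdwdef
  have hv0dw : v0 ∈ dw :=
    OreHelp.mem_dropWhile_of (List.mem_reverse.2 hv0L1) hPv0
  have hdwne : dw ≠ [] := List.ne_nil_of_mem hv0dw
  set L2 := dw.reverse with hL2def
  have hL2ne : L2 ≠ [] := by
    rw [hL2def, ne_eq, List.reverse_eq_nil_iff]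
    exact hdwne
  have hL2c : List.IsChain H.coe.Adj L2 := by
    rw [hL2def]
    rw [OreHelp.chain'_rev_iff hsym]
    exact ((OreHelp.chain'_rev_iff hsym).2 hL1c).suffix (List.dropWhile_suffix P)
  have hL2n : L2.Nodup := by
    rw [hL2def, List.nodup_reverse]
    exact (List.nodup_reverse.2 hL1n).sublist (List.dropWhile_suffix P).sublist
  have hL2mem : ∀ (x : V) (hx : x ∈ K), (⟨x, hKH hx⟩ : ↥H.verts) ∈ L2 := by
    intro x hx
    have hPv : P ⟨x, hKH hx⟩ = false := (hPfalse _).2 hx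
    rw [hL2def, List.mem_reverse]
    exact OreHelp.mem_dropWhile_of
      (List.mem_reverse.2 (OreHelp.mem_dropWhile_of (hLall _) hPv)) hPv
  -- head and last of L2 are in K
  have hL2head? : L2.head? = L1.head? := by
    rw [hL2def, List.head?_reverse, OreHelp.getLast?_dropWhile hdwne, List.getLast?_reverse]
  have hL2head : ((L2.head hL2ne : ↥H.verts) : V) ∈ K := by
    have h1 : L2.head? = some (L1.head hL1ne) := by
      rw [hL2head?, List.head?_eq_head]
    rw [List.head?_eq_head hL2ne, Option.some.injEq] at h1
    rw [h1]
    exact hL1head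
  have hL2last : ((L2.getLast hL2ne : ↥H.verts) : V) ∈ K := by
    have h1 : L2.getLast? = dw.head? := by
      rw [hL2def, List.getLast?_reverse]
    rw [List.getLast?_eq_getLast hL2ne, List.head?_eq_head hdwne, Option.some.injEq] at h1
    rw [← hPfalse, h1]
    exact OreHelp.head?_dropWhile_false (p := P) L1.reverse _ (List.head?_eq_head hdwne)
  -- build the walk
  obtain ⟨pL, hpL⟩ := OreHelp.chainToWalk H.coe L2 hL2ne hL2c
  refine ⟨L2.head hL2ne, L2.getLast hL2ne, pL, ?_, hL2head, hL2last, ?_, ?_⟩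
  · rw [SimpleGraph.Walk.isPath_def, hpL]
    exact hL2n
  · intro x hx
    exact ⟨⟨x, hKH hx⟩, by rw [hpL]; exact hL2mem x hx, rfl⟩
  · intro T hT hKT
    have hlenL2 : pL.length + 1 = L2.length := by
      rw [← SimpleGraph.Walk.length_support, hpL]
    have h1 : L2.length ≤ Fintype.card ↥H.verts := hL2n.length_le_card
    haveI : Fintype ↥T.verts := Fintype.ofFinite _
    haveI : Fintype ↥T.coe.edgeSet := Fintype.ofFinite _
    have htree := hT.card_edgeFinset
    have hK_le : K.ncard ≤ T.verts.ncard := Set.ncard_le_ncard hKT T.verts.toFinite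
    have hv_eq : T.verts.ncard = Fintype.card ↥T.verts := by
      rw [← Nat.card_coe_set_eq, Nat.card_eq_fintype_card]
    have hE : T.edgeSet.ncard = T.coe.edgeFinset.card := by
      rw [← SimpleGraph.Subgraph.image_coe_edgeSet_coe,
        Set.ncard_image_of_injective _ (Sym2.map.injective Subtype.val_injective),
        Set.ncard_eq_toFinset_card']
      rfl
    have hEk : K.ncard ≤ T.edgeSet.ncard + 1 := by omega
    have hk1 : K.ncard - 1 ≤ T.edgeSet.ncard := by omega
    have hmul : (K.ncard - 1) * K.ncard ≤ T.edgeSet.ncard * K.ncard :=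
      Nat.mul_le_mul_right _ hk1
    have hfin : pL.length + 1 ≤ (K.ncard - 1) * K.ncard := by
      rw [← hcard] at hsize
      omega
    have : pL.length + 1 ≤ K.ncard * T.edgeSet.ncard := by
      rw [mul_comm]
      omega
    omega
end

section
/- Let G_H be a finite simple graph on n vertices with a distinguished vertex v, let m ≥ 2, and let G be the apex-copies graph built from m copies of G_H with apex x. Suppose G_H has no Hamiltonian path starting at v. Then every tree subgraph T of G whose vertex set contains V(G) \ {x} satisfies: for each i ∈ {1, …, m}, some vertex of the i-th copy of G_H has degree at least 3 in T; in particular, T has at least m branch nodes. -/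
/-- The apex-copies graph: the disjoint union of `m` copies of `G_H` (on vertex set
`Fin m × α`) together with one additional apex vertex `none` adjacent exactly to the
copy of `v` in each of the `m` copies. -/
def apexCopies {α : Type*} (G_H : SimpleGraph α) (v : α) (m : ℕ) :
    SimpleGraph (Option (Fin m × α)) :=
  SimpleGraph.fromRel fun x y =>
    match x, y with
    | some (i, u), some (j, u') => i = j ∧ G_H.Adj u u'
    | some (_, u), none => u = v
    | _, _ => False

open SimpleGraph

lemma three_le_ncard' {β : Type*} {s : Set β} (hs : s.Finite) {a b c : β}
    (ha : a ∈ s) (hb : b ∈ s) (hc : c ∈ s) (hab : a ≠ b) (hac : a ≠ c) (hbc : b ≠ c) :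
    3 ≤ s.ncard := by
  have hsub : ({a, b, c} : Set β) ⊆ s := by
    intro x hx
    rcases hx with rfl | rfl | rfl <;> assumption
  have h3 : ({a, b, c} : Set β).ncard = 3 := by
    rw [Set.ncard_insert_of_notMem (by simp [hab, hac])
      ((Set.finite_singleton c).insert b), Set.ncard_pair hbc]
  calc 3 = ({a, b, c} : Set β).ncard := h3.symm
    _ ≤ s.ncard := Set.ncard_le_ncard hsub hs

lemma two_le_ncard' {β : Type*} {s : Set β} (hs : s.Finite) {a b : β}
    (ha : a ∈ s) (hb : b ∈ s) (hab : a ≠ b) : 2 ≤ s.ncard := by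
  calc 2 = ({a, b} : Set β).ncard := (Set.ncard_pair hab).symm
    _ ≤ s.ncard := Set.ncard_le_ncard (by intro x hx; rcases hx with rfl | rfl <;> assumption) hs

lemma exists_ham_of_max_degree_two {β : Type*} [Fintype β] [DecidableEq β] (G : SimpleGraph β)
    (hconn : G.Connected) (hdeg : ∀ u, (G.neighborSet u).ncard ≤ 2) (v : β)
    (hv : (G.neighborSet v).ncard ≤ 1) :
    ∃ b, ∃ p : G.Walk v b, p.IsHamiltonian := by
  by_contra hham
  push_neg at hham
  have ext : ∀ (b : β) (p : G.Walk v b), p.IsPath →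
      ∃ (b' : β) (p' : G.Walk v b'), p'.IsPath ∧ p'.length = p.length + 1 := by
    intro b p hp
    obtain ⟨w, hw⟩ : ∃ w, w ∉ p.support := by
      by_contra h
      push_neg at h
      exact hham b p (hp.isHamiltonian_of_mem h)
    obtain ⟨q⟩ := hconn.preconnected v w
    obtain ⟨d, hd, hdf, hds⟩ := q.exists_boundary_dart {x | x ∈ p.support}
      (by simp) hw
    have hadj : G.Adj d.fst d.snd := d.adj
    simp only [Set.mem_setOf_eq] at hdf hds
    by_cases hab : d.fst = b
    · rw [hab] at hadj
      refine ⟨d.snd, p.concat hadj, ?_, Walk.length_concat p hadj⟩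
      rw [Walk.isPath_def, Walk.support_concat]
      simp [List.concat_eq_append, List.nodup_append, hp.support_nodup, hds]
      exact fun a ha h => hds (h ▸ ha)
    · set q1 := p.takeUntil d.fst hdf with hq1
      set q2 := p.dropUntil d.fst hdf with hq2
      have hspec : q1.append q2 = p := p.take_spec hdf
      have hq2len : 0 < q2.length := by
        rcases Nat.eq_zero_or_pos q2.length with h0 | h0
        · exact absurd (Walk.eq_of_length_eq_zero h0) hab
        · exact h0
      have hnext : G.Adj d.fst (q2.getVert 1) := by
        have := q2.adj_getVert_succ hq2len
        simpa using q2.adj_getVert_succ (i := 0) hq2len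
      have hnextmemq2 : q2.getVert 1 ∈ q2.support :=
        Walk.mem_support_iff_exists_getVert.mpr ⟨1, rfl, hq2len⟩
      have hnextmem : q2.getVert 1 ∈ p.support :=
        p.support_dropUntil_subset hdf hnextmemq2
      have hnc : q2.getVert 1 ≠ d.snd := fun h => hds (h ▸ hnextmem)
      by_cases hav : d.fst = v
      · have h2 : 2 ≤ (G.neighborSet v).ncard := by
          refine two_le_ncard' (Set.toFinite _) (a := q2.getVert 1) (b := d.snd) ?_ ?_ hnc
          · exact hav ▸ hnext
          · exact hav ▸ hadj
        omega
      · have hq1len : 0 < q1.length := by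
          rcases Nat.eq_zero_or_pos q1.length with h0 | h0
          · exact absurd (Walk.eq_of_length_eq_zero h0).symm hav
          · exact h0
        set prev := q1.getVert (q1.length - 1) with hprevdef
        have hprev : G.Adj prev d.fst := by
          have h := q1.adj_getVert_succ (i := q1.length - 1) (by omega)
          have he : q1.length - 1 + 1 = q1.length := by omega
          rw [he, q1.getVert_length] at h
          exact h
        have hprevmemq1 : prev ∈ q1.support :=
          Walk.mem_support_iff_exists_getVert.mpr ⟨q1.length - 1, rfl, by omega⟩
        have hprevmem : prev ∈ p.support := p.support_takeUntil_subset hdf hprevmemq1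
        have hpn : prev ≠ q2.getVert 1 := by
          intro h
          have hnodup := hp.support_nodup
          rw [← hspec, Walk.support_append] at hnodup
          have hdisj := (List.nodup_append'.mp hnodup).2.2
          have h2 : q2.getVert 1 ∈ q2.support.tail := by
            have hcons := q2.support_eq_cons
            rw [hcons] at hnextmemq2
            rcases List.mem_cons.mp hnextmemq2 with h' | h'
            · exact absurd h' hnext.ne'
            · exact h'
          exact hdisj hprevmemq1 (h ▸ h2)
        have hps : prev ≠ d.snd := fun h => hds (h ▸ hprevmem)
        have h3 : 3 ≤ (G.neighborSet d.fst).ncard := by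
          refine three_le_ncard' (Set.toFinite _)
            (a := prev) (b := q2.getVert 1) (c := d.snd) hprev.symm hnext hadj hpn hps hnc
        have := hdeg d.fst
        omega
  have grow : ∀ n : ℕ, ∃ (b : β) (p : G.Walk v b), p.IsPath ∧ n ≤ p.length := by
    intro n
    induction n with
    | zero => exact ⟨v, Walk.nil, Walk.IsPath.nil, Nat.zero_le _⟩
    | succ n ih =>
      obtain ⟨b, p, hp, hl⟩ := ih
      obtain ⟨b', p', hp', hl'⟩ := ext b p hp
      exact ⟨b', p', hp', by omega⟩
  obtain ⟨b, p, hp, hl⟩ := grow (Fintype.card β)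
  have := hp.length_lt
  omega
open SimpleGraph

lemma apexCopies_adj_cases {α : Type*} {G_H : SimpleGraph α} {v : α} {m : ℕ}
    {i : Fin m} {u : α} {y : Option (Fin m × α)}
    (h : (apexCopies G_H v m).Adj (some (i, u)) y) :
    (∃ u', y = some (i, u') ∧ G_H.Adj u u') ∨ (y = none ∧ u = v) := by
  rw [apexCopies, SimpleGraph.fromRel_adj] at h
  obtain ⟨hne, h⟩ := h
  rcases y with _ | ⟨j, u'⟩
  · rcases h with h | h
    · exact Or.inr ⟨rfl, h⟩
    · exact h.elim
  · rcases h with h | h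
    · exact Or.inl ⟨u', by rw [h.1], h.2⟩
    · exact Or.inl ⟨u', by rw [h.1], h.2.symm⟩

/-- Let `G_H` be a finite simple graph on `n` vertices with a distinguished vertex `v`,
let `m ≥ 2`, and let `G` be the apex-copies graph with apex `x = none`. Suppose `G_H`
has no Hamiltonian path starting at `v`. Then every tree subgraph `T` of `G` whose
vertex set contains `V(G) \ {x}` satisfies: for each `i`, some vertex of the `i`-th copy
of `G_H` has degree at least 3 in `T`; in particular, `T` has at least `m` branch
nodes. -/
theorem stmt_11 {α : Type*} [Fintype α] [DecidableEq α]
    (G_H : SimpleGraph α) (v : α) (m : ℕ) (hm : 2 ≤ m)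
    (hham : ¬ ∃ (b : α) (p : G_H.Walk v b), p.IsHamiltonian) :
    ∀ T : (apexCopies G_H v m).Subgraph, T.coe.IsTree →
      (Set.univ \ {(none : Option (Fin m × α))}) ⊆ T.verts →
      (∀ i : Fin m, ∃ u : α, 3 ≤ (T.neighborSet (some (i, u))).ncard) ∧
      m ≤ {y : Option (Fin m × α) | 3 ≤ (T.neighborSet y).ncard}.ncard := by
  intro T hT hsub
  have hmem : ∀ y : Fin m × α, (some y : Option (Fin m × α)) ∈ T.verts := by
    intro y
    exact hsub ⟨trivial, by simp⟩
  have hconn := hT.isConnected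
  have key1 : ∀ i : Fin m, ∃ u : α, 3 ≤ (T.neighborSet (some (i, u))).ncard := by
    intro i
    by_contra hcon
    push_neg at hcon
    have hdegT : ∀ u, (T.neighborSet (some (i, u))).ncard ≤ 2 := by
      intro u; have := hcon u; omega
    set S : Set T.verts := {x | ∃ u, x.val = some (i, u)} with hS
    obtain ⟨j, hj⟩ : ∃ j : Fin m, j ≠ i := by
      refine ⟨if i = ⟨0, by omega⟩ then ⟨1, by omega⟩ else ⟨0, by omega⟩, ?_⟩
      split <;> rename_i h <;> simp_all [Fin.ext_iff] <;> omega
    have cross : ∀ x y : T.verts, T.coe.Adj x y → x ∈ S → y ∉ S →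
        x.val = some (i, v) ∧ y.val = none := by
      intro x y hxy hx hy
      obtain ⟨u, hu⟩ := hx
      have hadjT : T.Adj x.val y.val := hxy
      rw [hu] at hadjT
      rcases apexCopies_adj_cases (T.adj_sub hadjT) with ⟨u', hy', _⟩ | ⟨hy', hvv⟩
      · exact absurd ⟨u', hy'⟩ hy
      · exact ⟨by rw [hu, hvv], hy'⟩
    have hedge : T.Adj (some (i, v)) none := by
      obtain ⟨q⟩ := hconn.preconnected ⟨some (i, v), hmem _⟩ ⟨some (j, v), hmem _⟩
      obtain ⟨d, hd, hdf, hds⟩ := q.exists_boundary_dart S ⟨v, rfl⟩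
        (by rintro ⟨u, hu⟩; simp only [Option.some.injEq, Prod.mk.injEq] at hu; exact hj hu.1)
      obtain ⟨h1, h2⟩ := cross d.fst d.snd d.adj hdf hds
      have hT2 : T.Adj d.fst.val d.snd.val := d.adj
      rwa [h1, h2] at hT2
    let K : SimpleGraph α :=
      { Adj := fun a b => T.Adj (some (i, a)) (some (i, b)),
        symm := ⟨fun a b (h : T.Adj (some (i, a)) (some (i, b))) => h.symm⟩,
        loopless := ⟨fun a (h : T.Adj (some (i, a)) (some (i, a))) => (T.adj_sub h).ne rfl⟩ }
    have hKadj : ∀ {a b : α}, K.Adj a b ↔ T.Adj (some (i, a)) (some (i, b)) := by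
      intro a b; rfl
    have hKG : ∀ {a b : α}, K.Adj a b → G_H.Adj a b := by
      intro a b h
      rcases apexCopies_adj_cases (T.adj_sub (hKadj.mp h)) with ⟨u', hy', hadj⟩ | ⟨hy', _⟩
      · simp only [Option.some.injEq, Prod.mk.injEq] at hy'
        exact hy'.2 ▸ hadj
      · simp at hy'
    have hstay : ∀ (A B : T.verts), A ∈ S → B ∈ S → ∀ p : T.coe.Walk A B, p.IsPath →
        ∀ x ∈ p.support, x ∈ S := by
      intro A B hA hB p hp
      by_contra hx
      push_neg at hx
      obtain ⟨w, hwmem, hw⟩ := hx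
      obtain ⟨d1, hd1, h1f, h1s⟩ := (p.takeUntil w hwmem).exists_boundary_dart S hA hw
      obtain ⟨d2, hd2, h2f, h2s⟩ := (p.dropUntil w hwmem).reverse.exists_boundary_dart S hB hw
      obtain ⟨e1, _⟩ := cross _ _ d1.adj h1f h1s
      obtain ⟨e2, _⟩ := cross _ _ d2.adj h2f h2s
      have hvertex : d1.fst = d2.fst := Subtype.ext (by rw [e1, e2])
      have hm1 : d1.fst ∈ (p.takeUntil w hwmem).support :=
        Walk.dart_fst_mem_support_of_mem_darts _ hd1
      have hm2 : d2.fst ∈ (p.dropUntil w hwmem).support := by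
        have := Walk.dart_fst_mem_support_of_mem_darts _ hd2
        rwa [Walk.support_reverse, List.mem_reverse] at this
      have hm2t : d2.fst ∈ (p.dropUntil w hwmem).support.tail := by
        rw [(p.dropUntil w hwmem).support_eq_cons] at hm2
        rcases List.mem_cons.mp hm2 with h' | h'
        · exact absurd (h' ▸ h2f) hw
        · exact h'
      have hnodup := hp.support_nodup
      rw [← p.take_spec hwmem, Walk.support_append] at hnodup
      exact (List.nodup_append'.mp hnodup).2.2 (hvertex ▸ hm1) hm2t
    have hKconn : K.Connected := by
      rw [SimpleGraph.connected_iff]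
      refine ⟨?_, ⟨v⟩⟩
      intro a b
      have main : ∀ (A B : T.verts) (p : T.coe.Walk A B), (∀ x ∈ p.support, x ∈ S) →
          ∀ a b : α, A.val = some (i, a) → B.val = some (i, b) → K.Reachable a b := by
        intro A B p
        induction p with
        | nil =>
          intro hsup a b ha hb
          rw [ha] at hb
          simp only [Option.some.injEq, Prod.mk.injEq] at hb
          exact hb.2 ▸ Reachable.refl a
        | @cons A x B h q ih =>
          intro hsup a b ha hb
          obtain ⟨c, hc⟩ : x ∈ S := hsup x (by simp [Walk.support_cons])
          have hadjK : K.Adj a c := by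
            rw [hKadj, ← ha, ← hc]
            exact h
          exact hadjK.reachable.trans
            (ih (fun y hy => hsup y (by simp [Walk.support_cons, hy])) c b hc hb)
      obtain ⟨q0⟩ := hconn.preconnected ⟨some (i, a), hmem _⟩ ⟨some (i, b), hmem _⟩
      exact main _ _ q0.toPath.val
        (hstay _ _ ⟨a, rfl⟩ ⟨b, rfl⟩ q0.toPath.val q0.toPath.prop) a b rfl rfl
    have hinj : Function.Injective (fun z : α => (some (i, z) : Option (Fin m × α))) := by
      intro a b h
      simpa using h
    have hKdeg : ∀ u, (K.neighborSet u).ncard ≤ 2 := by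
      intro u
      have himg : (fun z : α => (some (i, z) : Option (Fin m × α))) '' K.neighborSet u
          ⊆ T.neighborSet (some (i, u)) := by
        rintro _ ⟨z, hz, rfl⟩
        exact hz
      calc (K.neighborSet u).ncard
          = ((fun z : α => (some (i, z) : Option (Fin m × α))) '' K.neighborSet u).ncard :=
            (Set.ncard_image_of_injective _ hinj).symm
        _ ≤ (T.neighborSet (some (i, u))).ncard := Set.ncard_le_ncard himg (Set.toFinite _)
        _ ≤ 2 := hdegT u
    have hKdegv : (K.neighborSet v).ncard ≤ 1 := by
      have himg : (fun z : α => (some (i, z) : Option (Fin m × α))) '' K.neighborSet v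
          ⊆ T.neighborSet (some (i, v)) \ {none} := by
        rintro _ ⟨z, hz, rfl⟩
        exact ⟨hz, by simp⟩
      have hnone : (none : Option (Fin m × α)) ∈ T.neighborSet (some (i, v)) := hedge
      have hd := Set.ncard_diff_singleton_of_mem hnone
      calc (K.neighborSet v).ncard
          = ((fun z : α => (some (i, z) : Option (Fin m × α))) '' K.neighborSet v).ncard :=
            (Set.ncard_image_of_injective _ hinj).symm
        _ ≤ (T.neighborSet (some (i, v)) \ {none}).ncard := Set.ncard_le_ncard himg (Set.toFinite _)
        _ = (T.neighborSet (some (i, v))).ncard - 1 := hd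
        _ ≤ 1 := by have := hdegT v; omega
    obtain ⟨b, p, hpham⟩ := exists_ham_of_max_degree_two K hKconn hKdeg v hKdegv
    have hle : K ≤ G_H := fun _ _ h => hKG h
    refine hham ⟨b, p.mapLe hle, ?_⟩
    exact hpham.map (SimpleGraph.Hom.ofLE hle) Function.bijective_id
  refine ⟨key1, ?_⟩
  choose u hu using key1
  have hinj : Function.Injective (fun i : Fin m => (some (i, u i) : Option (Fin m × α))) := by
    intro a b h
    simp only [Option.some.injEq, Prod.mk.injEq] at h
    exact h.1
  calc m = (Set.univ : Set (Fin m)).ncard := by simp [Set.ncard_univ]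
    _ = ((fun i : Fin m => (some (i, u i) : Option (Fin m × α))) '' Set.univ).ncard :=
        (Set.ncard_image_of_injective _ hinj).symm
    _ ≤ _ := Set.ncard_le_ncard (by rintro _ ⟨i, -, rfl⟩; exact hu i) (Set.toFinite _)
end
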